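/- Let X and Y be metric spaces and E and F nontrivial normed spaces. If there exists a biseparating map T: C(X,E) → C_*(Y,F), then X and Y are compact. -/

import Mathlib

open Topology Filter Set

namespace Stmt9

open Metric

set_option linter.unusedSectionVars false

/-- The space of continuous functions, as a set of functions. -/
def Cset (X E : Type*) [TopologicalSpace X] [TopologicalSpace E] : Set (X → E) :=
  {f | Continuous f}

/-- The space of bounded continuous functions, as a set of functions. -/
def CbSet (X E : Type*) [TopologicalSpace X] [PseudoMetricSpace E] : Set (X → E) :=
  {f | Continuous f ∧ Bornology.IsBounded (Set.range f)}

/-- `T` is biseparating: a bijection such that `f, g` are disjoint with respect to `h`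
iff `Tf, Tg` are disjoint with respect to `Th`. -/
def Biseparating {X Y E F : Type*} {A : Set (X → E)} {B : Set (Y → F)} (T : A → B) : Prop :=
  Function.Bijective T ∧ ∀ f g h : A,
    ({x | (f : X → E) x ≠ (h : X → E) x} ∩ {x | (g : X → E) x ≠ (h : X → E) x} = ∅ ↔
      {y | (T f : Y → F) y ≠ (T h : Y → F) y} ∩ {y | (T g : Y → F) y ≠ (T h : Y → F) y} = ∅)




section Cutoff
variable {Z : Type*} [MetricSpace Z]

/-- A continuous cutoff: equal to `1` on `ball p (s/2)`, vanishing outside `ball p s`,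
with values in `[0,1]`. -/
noncomputable def cutoff (p : Z) (s : ℝ) : Z → ℝ :=
  fun x => min 1 (max (2 - 2 * dist x p / s) 0)

lemma cutoff_continuous (p : Z) (s : ℝ) : Continuous (cutoff p s) := by
  unfold cutoff
  exact continuous_const.min ((continuous_const.sub
    ((continuous_const.mul (continuous_id.dist continuous_const)).div_const s)).max
    continuous_const)

lemma cutoff_nonneg (p : Z) (s : ℝ) (x : Z) : 0 ≤ cutoff p s x :=
  le_min (by norm_num) (le_max_right _ _)

lemma cutoff_le_one (p : Z) (s : ℝ) (x : Z) : cutoff p s x ≤ 1 := min_le_left _ _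

lemma cutoff_eq_one {p : Z} {s : ℝ} (hs : 0 < s) {x : Z} (hx : dist x p < s / 2) :
    cutoff p s x = 1 := by
  have h1 : (1 : ℝ) ≤ 2 - 2 * dist x p / s := by
    have : 2 * dist x p / s < 1 := by
      rw [div_lt_one hs]; linarith
    linarith
  unfold cutoff
  rw [max_eq_left (by linarith), min_eq_left h1]

lemma cutoff_eq_zero {p : Z} {s : ℝ} (hs : 0 < s) {x : Z} (hx : ¬ x ∈ ball p s) :
    cutoff p s x = 0 := by
  rw [mem_ball, not_lt] at hx
  have h1 : 2 - 2 * dist x p / s ≤ 0 := by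
    have : (2 : ℝ) ≤ 2 * dist x p / s := by
      rw [le_div_iff₀ hs]; linarith
    linarith
  unfold cutoff
  rw [max_eq_right h1, min_eq_right (by norm_num)]

end Cutoff



section Noncompact
variable {Z : Type*} [MetricSpace Z]

/-- In a noncompact metric space there is a sequence with no convergent subsequence. -/
lemma exists_bad_seq (h : ¬ CompactSpace Z) :
    ∃ u : ℕ → Z, ∀ (a : Z) (φ : ℕ → ℕ), StrictMono φ →
      ¬ Tendsto (u ∘ φ) atTop (𝓝 a) := by
  have hn : ¬ SeqCompactSpace Z := fun hs => h (compactSpace_iff_seqCompactSpace.2 hs)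
  rw [seqCompactSpace_iff] at hn
  unfold IsSeqCompact at hn
  push_neg at hn
  obtain ⟨u, -, hu⟩ := hn
  refine ⟨u, fun a φ hφ ht => ?_⟩
  exact hu a (mem_univ a) φ hφ ht

/-- Around every point, a sequence with no convergent subsequence visits some ball
only finitely often. -/
lemma finite_visits {u : ℕ → Z}
    (hu : ∀ (a : Z) (φ : ℕ → ℕ), StrictMono φ → ¬ Tendsto (u ∘ φ) atTop (𝓝 a)) (z : Z) :
    ∃ ε > 0, {n | u n ∈ ball z ε}.Finite := by
  by_contra hc
  push_neg at hc
  have hfreq : ∀ k : ℕ, ∃ᶠ n in atTop, u n ∈ ball z (1 / (k + 1)) := by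
    intro k
    have hinf : {n | u n ∈ ball z (1 / (k + 1))}.Infinite := by
      intro hfin
      exact (hc (1 / (k + 1)) (by positivity)) hfin
    rw [frequently_atTop]
    intro a
    by_contra hb
    push_neg at hb
    refine hinf (Set.Finite.subset (Set.finite_Iio a) ?_)
    intro n hn
    by_contra hlt
    exact hb n (by simpa using hlt) hn
  obtain ⟨φ, hφ, hmem⟩ := Filter.extraction_forall_of_frequently hfreq
  refine hu z φ hφ ?_
  rw [tendsto_iff_dist_tendsto_zero]
  refine squeeze_zero (fun k => dist_nonneg) (fun k => (mem_ball.mp (hmem k)).le) ?_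
  exact tendsto_one_div_add_atTop_nhds_zero_nat

/-- A noncompact metric space contains a locally finite sequence of pairwise
disjoint open balls. -/
lemma exists_disjoint_balls (h : ¬ CompactSpace Z) :
    ∃ (p : ℕ → Z) (s : ℕ → ℝ),
      (∀ n, 0 < s n) ∧
      (∀ m n, m ≠ n → Disjoint (ball (p m) (s m)) (ball (p n) (s n))) ∧
      LocallyFinite (fun n => ball (p n) (s n)) := by
  obtain ⟨u, hu⟩ := exists_bad_seq h
  choose ε hεpos hεfin using finite_visits hu
  -- the separated subsequence
  set F : ℕ → Set ℕ := fun j => {m | u m ∈ ball (u j) (ε (u j))} with hF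
  have hFfin : ∀ j, (F j).Finite := fun j => hεfin (u j)
  have hFself : ∀ j, j ∈ F j := fun j => by
    simp only [F, mem_setOf_eq, mem_ball, dist_self]; exact hεpos (u j)
  let step : ℕ → ℕ := fun j => max j ((hFfin j).toFinset.sup id) + 1
  let ψ : ℕ → ℕ := fun k => Nat.rec 0 (fun _ ih => step ih) k
  have hψsucc : ∀ k, ψ (k + 1) = step (ψ k) := fun k => rfl
  have hψmono : StrictMono ψ := by
    apply strictMono_nat_of_lt_succ
    intro k
    rw [hψsucc]
    exact lt_of_le_of_lt (le_max_left _ _) (Nat.lt_succ_self _)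
  have hstep : ∀ k m, m ∈ F (ψ k) → m < ψ (k + 1) := by
    intro k m hm
    have h1 : m ≤ (hFfin (ψ k)).toFinset.sup id :=
      Finset.le_sup (f := id) ((hFfin (ψ k)).mem_toFinset.mpr hm)
    have h2 : ψ (k + 1) = max (ψ k) ((hFfin (ψ k)).toFinset.sup id) + 1 := rfl
    have h3 : (hFfin (ψ k)).toFinset.sup id ≤ max (ψ k) ((hFfin (ψ k)).toFinset.sup id) :=
      le_max_right _ _
    omega
  have hsep : ∀ i j, i < j → ψ j ∉ F (ψ i) := by
    intro i j hij hmem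
    have h1 : ψ j < ψ (i + 1) := hstep i _ hmem
    have h2 : ψ (i + 1) ≤ ψ j := hψmono.le_iff_le.mpr hij
    omega
  set p : ℕ → Z := fun k => u (ψ k) with hp
  set ε' : ℕ → ℝ := fun k => ε (p k) with hε'
  have hdist : ∀ i j, i < j → ε' i ≤ dist (p j) (p i) := by
    intro i j hij
    have := hsep i j hij
    simp only [F, mem_setOf_eq, mem_ball, not_lt] at this
    exact this
  -- radii
  let m : ℕ → ℝ := fun k => Nat.rec (ε' 0) (fun k ih => min ih (ε' (k + 1))) k
  have hmsucc : ∀ k, m (k + 1) = min (m k) (ε' (k + 1)) := fun k => rfl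
  have hmpos : ∀ k, 0 < m k := by
    intro k; induction k with
    | zero => exact hεpos _
    | succ k ih => rw [hmsucc]; exact lt_min ih (hεpos _)
  have hmle : ∀ i k, i ≤ k → m k ≤ ε' i := by
    intro i k hik
    induction k with
    | zero => interval_cases i; exact le_refl _
    | succ k ih =>
      rw [hmsucc]
      rcases Nat.lt_or_ge i (k+1) with hlt | hge
      · exact le_trans (min_le_left _ _) (ih (by omega))
      · have : i = k + 1 := by omega
        subst this; exact min_le_right _ _
  set s : ℕ → ℝ := fun k => (1/2) * min ((1/2)^k) (m k) with hs
  have hspos : ∀ k, 0 < s k := fun k => by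
    have := hmpos k
    have h2 : (0:ℝ) < (1/2)^k := by positivity
    simp only [s]; positivity
  have hsle : ∀ i k, i ≤ k → s k ≤ ε' i / 2 := by
    intro i k hik
    have := hmle i k hik
    have : min ((1/2:ℝ)^k) (m k) ≤ ε' i := le_trans (min_le_right _ _) this
    simp only [s]; linarith
  have hspow : ∀ k, s k ≤ (1/2) * (1/2)^k := fun k => by
    simp only [s]
    have := min_le_left ((1/2:ℝ)^k) (m k); linarith
  refine ⟨p, s, hspos, ?_, ?_⟩
  · -- disjointness
    have key : ∀ i j, i < j → Disjoint (ball (p i) (s i)) (ball (p j) (s j)) := by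
      intro i j hij
      rw [Set.disjoint_left]
      intro x hxi hxj
      rw [mem_ball] at hxi hxj
      have h1 : dist (p j) (p i) ≤ dist (p j) x + dist x (p i) := dist_triangle _ _ _
      have h2 : dist (p j) x < s j := by rwa [dist_comm]
      have h3 : s i ≤ ε' i / 2 := hsle i i le_rfl
      have h4 : s j ≤ ε' i / 2 := hsle i j hij.le
      have h5 := hdist i j hij
      linarith
    intro a b hab
    rcases Nat.lt_or_ge a b with hlt | hge
    · exact key a b hlt
    · exact (key b a (by omega)).symm
  · -- locally finite
    intro z
    set δ := ε z with hδ
    have hδpos : 0 < δ := hεpos z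
    have hδfin := hεfin z
    refine ⟨ball z (δ/2), ball_mem_nhds z (by linarith), ?_⟩
    have hsub : {k | (ball (p k) (s k) ∩ ball z (δ/2)).Nonempty} ⊆
        (ψ ⁻¹' {n | u n ∈ ball z δ}) ∪ {k | δ/2 < (1/2:ℝ)^k} := by
      rintro k ⟨x, hx1, hx2⟩
      rw [mem_ball] at hx1 hx2
      rcases le_or_gt ((1/2:ℝ)^k) (δ/2) with hle | hgt
      · left
        have hsk : s k ≤ δ/4 := le_trans (hspow k) (by linarith)
        have : dist (p k) z ≤ dist (p k) x + dist x z := dist_triangle _ _ _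
        have hq : dist (p k) x < s k := by rwa [dist_comm]
        simp only [Set.mem_preimage, mem_setOf_eq, mem_ball]
        show dist (u (ψ k)) z < δ
        calc dist (u (ψ k)) z = dist (p k) z := rfl
          _ ≤ dist (p k) x + dist x z := dist_triangle _ _ _
          _ < δ/4 + δ/2 := by linarith
          _ < δ := by linarith
      · right; exact hgt
    refine Set.Finite.subset (Set.Finite.union ?_ ?_) hsub
    · exact Set.Finite.preimage (hψmono.injective.injOn) hδfin
    · obtain ⟨N, hN⟩ := exists_pow_lt_of_lt_one (by linarith : (0:ℝ) < δ/2) (by norm_num : (1/2:ℝ) < 1)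
      refine Set.Finite.subset (Set.finite_Iio N) ?_
      intro k hk
      simp only [mem_setOf_eq] at hk
      by_contra hge
      simp only [Set.mem_Iio, not_lt] at hge
      have : (1/2:ℝ)^k ≤ (1/2)^N :=
        pow_le_pow_of_le_one (by norm_num) (by norm_num) hge
      linarith
end Noncompact





lemma sep_iff {α β E F : Type*} {A : Set (α → E)} {B : Set (β → F)} (T : A → B)
    (hT : Biseparating T) (f g h : A) :
    (∀ x, (f : α → E) x = (h : α → E) x ∨ (g : α → E) x = (h : α → E) x) ↔
    (∀ y, (T f : β → F) y = (T h : β → F) y ∨ (T g : β → F) y = (T h : β → F) y) := by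
  have key := hT.2 f g h
  rw [Set.eq_empty_iff_forall_notMem, Set.eq_empty_iff_forall_notMem] at key
  simpa only [mem_inter_iff, mem_setOf_eq, not_and_or, not_not, ne_eq] using key



section Xhalf

variable {X Y E F : Type*} [MetricSpace X] [MetricSpace Y]
    [NormedAddCommGroup E] [NormedSpace ℝ E]
    [NormedAddCommGroup F] [NormedSpace ℝ F]

lemma norm_bound_of_CbSet {c : Y → F} (hc : c ∈ CbSet Y F) : ∃ C, ∀ y, ‖c y‖ ≤ C := by
  obtain ⟨C, hC⟩ := isBounded_iff_forall_norm_le.mp hc.2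
  exact ⟨C, fun y => hC _ (mem_range_self y)⟩

lemma compactX [Nontrivial E] [Nontrivial F]
    (T : ↥(Cset X E) → ↥(CbSet Y F)) (hT : Biseparating T) : CompactSpace X := by
  by_contra hX
  obtain ⟨p, s, hspos, hdisj, hlf⟩ := exists_disjoint_balls hX
  let z0 : ↥(Cset X E) := ⟨fun _ => 0, continuous_const⟩
  set c := T z0 with hc
  obtain ⟨Cc, hCc⟩ := norm_bound_of_CbSet c.2
  -- uniform bound on images of functions supported in one of the balls
  have main : ∃ (n : ℕ) (M : ℝ), ∀ φ : ↥(Cset X E),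
      (∀ x, x ∉ ball (p n) (s n) → (φ : X → E) x = 0) →
      ∀ y, ‖(T φ : Y → F) y - (c : Y → F) y‖ ≤ M := by
    by_contra hcon
    push_neg at hcon
    have hsel : ∀ n : ℕ, ∃ φ : ↥(Cset X E),
        (∀ x, x ∉ ball (p n) (s n) → (φ : X → E) x = 0) ∧
        ∃ y, (n : ℝ) < ‖(T φ : Y → F) y - (c : Y → F) y‖ := fun n => hcon n n
    choose φ hsupp hwit using hsel
    choose yw hyw using hwit
    have hsupport : ∀ n, Function.support (fun x => (φ n : X → E) x) ⊆ ball (p n) (s n) := by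
      intro n x hx
      by_contra hxb
      exact hx (hsupp n x hxb)
    have hlf' : LocallyFinite fun n => Function.support (fun x => (φ n : X → E) x) :=
      hlf.subset hsupport
    have hfc : Continuous (fun x => ∑ᶠ n, (φ n : X → E) x) :=
      continuous_finsum (fun n => (φ n).2) hlf'
    set f : X → E := fun x => ∑ᶠ n, (φ n : X → E) x with hf
    let fA : ↥(Cset X E) := ⟨f, hfc⟩
    have hfon : ∀ n x, x ∈ ball (p n) (s n) → f x = (φ n : X → E) x := by
      intro n x hx
      apply finsum_eq_single
      intro m hm
      apply hsupp m
      intro hxm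
      exact (Set.disjoint_left.mp (hdisj m n hm) hxm) hx
    have hsepn : ∀ n y, (T fA : Y → F) y = (T (φ n) : Y → F) y ∨
        (c : Y → F) y = (T (φ n) : Y → F) y := by
      intro n
      refine (sep_iff T hT fA z0 (φ n)).mp ?_
      intro x
      by_cases hx : x ∈ ball (p n) (s n)
      · left; exact hfon n x hx
      · right; exact (hsupp n x hx).symm
    obtain ⟨Cf, hCf⟩ := norm_bound_of_CbSet (T fA).2
    obtain ⟨n, hn⟩ := exists_nat_gt (Cf + Cc)
    have h1 := hyw n
    have h2 : (c : Y → F) (yw n) ≠ (T (φ n) : Y → F) (yw n) := by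
      intro heq
      rw [← heq, sub_self, norm_zero] at h1
      exact (Nat.cast_nonneg n).not_gt h1
    have h3 : (T fA : Y → F) (yw n) = (T (φ n) : Y → F) (yw n) :=
      (hsepn n (yw n)).resolve_right h2
    have h4 : (n : ℝ) < ‖(T fA : Y → F) (yw n) - (c : Y → F) (yw n)‖ := by
      rw [h3]; exact h1
    have h5 : ‖(T fA : Y → F) (yw n) - (c : Y → F) (yw n)‖ ≤ Cf + Cc :=
      (norm_sub_le _ _).trans (add_le_add (hCf _) (hCc _))
    linarith
  obtain ⟨n₀, M, hM⟩ := main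
  set M' := max M 0 with hM'
  have hM0 : 0 ≤ M' := le_max_right M 0
  have hMM : M ≤ M' := le_max_left M 0
  obtain ⟨v, hv⟩ := exists_ne (0 : F)
  have hvn : ‖v‖ ≠ 0 := norm_ne_zero_iff.mpr hv
  set w : F := ((M' + 1) / ‖v‖) • v with hw
  have hwnorm : ‖w‖ = M' + 1 := by
    rw [hw, norm_smul, Real.norm_eq_abs, abs_div, abs_of_nonneg (by linarith : (0:ℝ) ≤ M' + 1),
      abs_of_nonneg (norm_nonneg v), div_mul_cancel₀ _ hvn]
  have hGmem : (fun y => (c : Y → F) y + w) ∈ CbSet Y F := by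
    constructor
    · exact c.2.1.add continuous_const
    · rw [isBounded_iff_forall_norm_le]
      refine ⟨Cc + ‖w‖, ?_⟩
      rintro x ⟨y, rfl⟩
      exact (norm_add_le _ _).trans (add_le_add (hCc y) le_rfl)
  let Teq := Equiv.ofBijective T hT.1
  set q := Teq.symm ⟨_, hGmem⟩ with hq
  have hTq : T q = ⟨_, hGmem⟩ := Teq.apply_symm_apply _
  have hgap : ∀ (ψf : ↥(Cset X E)), (∀ x, x ∉ ball (p n₀) (s n₀) → (ψf : X → E) x = 0) →
      ∀ y, (T ψf : Y → F) y ≠ (c : Y → F) y + w := by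
    intro ψf hψ y heq
    have hb := hM ψf hψ y
    rw [heq, add_sub_cancel_left, hwnorm] at hb
    linarith
  obtain ⟨e, he⟩ := exists_ne (0 : E)
  let φstar : ↥(Cset X E) := ⟨fun x => cutoff (p n₀) (s n₀) x • (q : X → E) x,
    (cutoff_continuous _ _).smul q.2⟩
  have hφsupp : ∀ x, x ∉ ball (p n₀) (s n₀) → (φstar : X → E) x = 0 := by
    intro x hx
    show cutoff (p n₀) (s n₀) x • (q : X → E) x = 0
    rw [cutoff_eq_zero (hspos n₀) hx, zero_smul]
  let g : ↥(Cset X E) := ⟨fun x => (φstar : X → E) x + cutoff (p n₀) (s n₀ / 2) x • e,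
    φstar.2.add ((cutoff_continuous _ _).smul continuous_const)⟩
  have hsepg : ∀ x, (q : X → E) x = (φstar : X → E) x ∨
      (g : X → E) x = (φstar : X → E) x := by
    intro x
    by_cases hx : dist x (p n₀) < s n₀ / 2
    · left
      show (q : X → E) x = cutoff (p n₀) (s n₀) x • (q : X → E) x
      rw [cutoff_eq_one (hspos n₀) hx, one_smul]
    · right
      show (φstar : X → E) x + cutoff (p n₀) (s n₀ / 2) x • e = (φstar : X → E) x
      rw [cutoff_eq_zero (by have := hspos n₀; linarith : (0:ℝ) < s n₀ / 2)
        (fun hmem => hx (mem_ball.mp hmem)), zero_smul, add_zero]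
  have htrans := (sep_iff T hT q g φstar).mp hsepg
  have hgeq : ∀ y, (T g : Y → F) y = (T φstar : Y → F) y := by
    intro y
    rcases htrans y with hl | hr
    · exfalso
      have hqy : (T q : Y → F) y = (c : Y → F) y + w := by rw [hTq]
      exact hgap φstar hφsupp y (hl ▸ hqy)
    · exact hr
  have hgφ : g = φstar := hT.1.1 (Subtype.ext (funext hgeq))
  have hval := congrArg (fun (h : ↥(Cset X E)) => (h : X → E) (p n₀)) hgφ
  simp only [g, φstar] at hval
  have hcut1 : cutoff (p n₀) (s n₀ / 2) (p n₀) = 1 := by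
    apply cutoff_eq_one (by have := hspos n₀; linarith : (0:ℝ) < s n₀ / 2)
    rw [dist_self]
    have := hspos n₀; linarith
  rw [hcut1, one_smul] at hval
  exact he (by
    have := add_left_cancel (a := cutoff (p n₀) (s n₀) (p n₀) • (q : X → E) (p n₀))
      (b := e) (c := 0) ?_
    · exact this
    · rw [add_zero]; exact hval)

end Xhalf


section Yhalf

variable {X Y E F : Type*} [MetricSpace X] [MetricSpace Y]
    [NormedAddCommGroup E] [NormedSpace ℝ E]
    [NormedAddCommGroup F] [NormedSpace ℝ F]

lemma compactY [Nontrivial E] [Nontrivial F]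
    (T : ↥(Cset X E) → ↥(CbSet Y F)) (hT : Biseparating T)
    (hXc : CompactSpace X) : CompactSpace Y := by
  by_contra hY
  obtain ⟨p, s, hspos, hdisj, hlf⟩ := exists_disjoint_balls hY
  haveI : SeqCompactSpace X := compactSpace_iff_seqCompactSpace.mp hXc
  let Teq := Equiv.ofBijective T hT.1
  let z0 : ↥(CbSet Y F) := ⟨fun _ => 0, continuous_const, by
    rw [isBounded_iff_forall_norm_le]
    exact ⟨0, by rintro x ⟨y, rfl⟩; simp⟩⟩
  set b := Teq.symm z0 with hb
  obtain ⟨v, hv⟩ := exists_ne (0 : E)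
  set e : E := ‖v‖⁻¹ • v with he
  have he1 : ‖e‖ = 1 := by
    rw [he, norm_smul, Real.norm_eq_abs, abs_of_nonneg (inv_nonneg.mpr (norm_nonneg v)),
      inv_mul_cancel₀ (norm_ne_zero_iff.mpr hv)]
  let fE : ↥(Cset X E) := ⟨fun x => (b : X → E) x + e, b.2.add continuous_const⟩
  set γ := T fE with hγ
  obtain ⟨Cγ, hCγ⟩ := norm_bound_of_CbSet γ.2
  set K := max Cγ 0 with hKdef
  have hK : ∀ y, ‖(γ : Y → F) y‖ ≤ K := fun y => le_trans (hCγ y) (le_max_left _ _)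
  have hK0 : 0 ≤ K := le_max_right _ _
  have main : ∃ n : ℕ, ∀ θ : ↥(CbSet Y F),
      (∀ y, ‖(θ : Y → F) y‖ ≤ K) →
      (∀ y, y ∉ ball (p n) (s n) → (θ : Y → F) y = 0) →
      ∀ x, ‖(Teq.symm θ : X → E) x - (b : X → E) x‖ ≤ 1/2 := by
    by_contra hcon
    push_neg at hcon
    choose θ hcap hsupp hwit using hcon
    choose xw hxw using hwit
    obtain ⟨xstar, φ, hφmono, hφconv⟩ := SeqCompactSpace.tendsto_subseq xw
    set idx : ℕ → ℕ := fun k => φ (2*k) with hidx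
    set ido : ℕ → ℕ := fun k => φ (2*k+1) with hido
    have hidxinj : Function.Injective idx := by
      intro a c hac
      have := hφmono.injective hac
      omega
    have hsupport : ∀ k, Function.support (fun y => (θ (idx k) : Y → F) y) ⊆
        ball (p (idx k)) (s (idx k)) := by
      intro k y hy
      by_contra hyb
      exact hy (hsupp (idx k) y hyb)
    have hlf2 : LocallyFinite fun k => ball (p (idx k)) (s (idx k)) :=
      hlf.comp_injective hidxinj
    have hgc : Continuous (fun y => ∑ᶠ k, (θ (idx k) : Y → F) y) :=
      continuous_finsum (fun k => (θ (idx k)).2.1) (hlf2.subset hsupport)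
    set g : Y → F := fun y => ∑ᶠ k, (θ (idx k) : Y → F) y with hg
    have hgon : ∀ k y, y ∈ ball (p (idx k)) (s (idx k)) → g y = (θ (idx k) : Y → F) y := by
      intro k y hy
      apply finsum_eq_single
      intro j hj
      apply hsupp (idx j) y
      intro hym
      exact (Set.disjoint_left.mp (hdisj (idx j) (idx k) (fun hh => hj (hidxinj hh))) hym) hy
    have hgoff : ∀ y, (∀ k, y ∉ ball (p (idx k)) (s (idx k))) → g y = 0 := fun y hy =>
      finsum_eq_zero_of_forall_eq_zero (fun k => hsupp (idx k) y (hy k))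
    have hgbd : ∀ y, ‖g y‖ ≤ K := by
      intro y
      by_cases hy : ∃ k, y ∈ ball (p (idx k)) (s (idx k))
      · obtain ⟨k, hk⟩ := hy
        rw [hgon k y hk]; exact hcap (idx k) y
      · push_neg at hy
        rw [hgoff y hy, norm_zero]; exact hK0
    let gB : ↥(CbSet Y F) := ⟨g, hgc, by
      rw [isBounded_iff_forall_norm_le]
      exact ⟨K, by rintro x ⟨y, rfl⟩; exact hgbd y⟩⟩
    set fg := Teq.symm gB with hfg
    have heven : ∀ k, (fg : X → E) (xw (idx k)) =
        (Teq.symm (θ (idx k)) : X → E) (xw (idx k)) := by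
      intro k
      have hsepY : ∀ y, (gB : Y → F) y = (θ (idx k) : Y → F) y ∨
          (z0 : Y → F) y = (θ (idx k) : Y → F) y := by
        intro y
        by_cases hy : y ∈ ball (p (idx k)) (s (idx k))
        · left; exact hgon k y hy
        · right; exact (hsupp (idx k) y hy).symm
      have htr : ∀ x, (fg : X → E) x = (Teq.symm (θ (idx k)) : X → E) x ∨
          (b : X → E) x = (Teq.symm (θ (idx k)) : X → E) x := by
        refine (sep_iff T hT fg b (Teq.symm (θ (idx k)))).mpr ?_
        have e1 : T fg = gB := Teq.apply_symm_apply _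
        have e2 : T b = z0 := Teq.apply_symm_apply _
        have e3 : T (Teq.symm (θ (idx k))) = θ (idx k) := Teq.apply_symm_apply _
        rw [e1, e2, e3]
        exact hsepY
      rcases htr (xw (idx k)) with h | h
      · exact h
      · exfalso
        have hbig := hxw (idx k)
        rw [← h, sub_self, norm_zero] at hbig
        linarith
    have hodd : ∀ k, (fg : X → E) (xw (ido k)) = (b : X → E) (xw (ido k)) := by
      intro k
      have hsepY : ∀ y, (gB : Y → F) y = (z0 : Y → F) y ∨
          (θ (ido k) : Y → F) y = (z0 : Y → F) y := by
        intro y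
        by_cases hy : (θ (ido k) : Y → F) y = 0
        · right; exact hy
        · left
          have hymem : y ∈ ball (p (ido k)) (s (ido k)) := by
            by_contra hc
            exact hy (hsupp (ido k) y hc)
          show g y = 0
          apply hgoff
          intro j hj
          have hne : idx j ≠ ido k := by
            intro hh
            have := hφmono.injective hh
            omega
          exact absurd hymem (Set.disjoint_left.mp (hdisj (idx j) (ido k) hne) hj)
      have htr : ∀ x, (fg : X → E) x = (b : X → E) x ∨
          (Teq.symm (θ (ido k)) : X → E) x = (b : X → E) x := by
        refine (sep_iff T hT fg (Teq.symm (θ (ido k))) b).mpr ?_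
        have e1 : T fg = gB := Teq.apply_symm_apply _
        have e2 : T b = z0 := Teq.apply_symm_apply _
        have e3 : T (Teq.symm (θ (ido k))) = θ (ido k) := Teq.apply_symm_apply _
        rw [e1, e2, e3]
        exact hsepY
      rcases htr (xw (ido k)) with h | h
      · exact h
      · exfalso
        have hbig := hxw (ido k)
        rw [h, sub_self, norm_zero] at hbig
        linarith
    have h2k : Tendsto (fun k : ℕ => 2*k) atTop atTop :=
      tendsto_atTop_atTop_of_monotone (fun a c hac => by omega) (fun c => ⟨c, by omega⟩)
    have h2k1 : Tendsto (fun k : ℕ => 2*k+1) atTop atTop :=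
      tendsto_atTop_atTop_of_monotone (fun a c hac => by omega) (fun c => ⟨c, by omega⟩)
    have hxe : Tendsto (fun k => xw (idx k)) atTop (𝓝 xstar) := hφconv.comp h2k
    have hxo : Tendsto (fun k => xw (ido k)) atTop (𝓝 xstar) := hφconv.comp h2k1
    have hfgc : Continuous (fg : X → E) := fg.2
    have hbc : Continuous (b : X → E) := b.2
    have hfgb : (fg : X → E) xstar = (b : X → E) xstar := by
      have l1 : Tendsto (fun k => (fg : X → E) (xw (ido k))) atTop
          (𝓝 ((fg : X → E) xstar)) := (hfgc.tendsto xstar).comp hxo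
      have l2 : Tendsto (fun k => (b : X → E) (xw (ido k))) atTop
          (𝓝 ((b : X → E) xstar)) := (hbc.tendsto xstar).comp hxo
      have heq : (fun k => (fg : X → E) (xw (ido k))) =
          (fun k => (b : X → E) (xw (ido k))) := funext hodd
      rw [heq] at l1
      exact tendsto_nhds_unique l1 l2
    have l3 : Tendsto (fun k => ‖(fg : X → E) (xw (idx k)) - (b : X → E) (xw (idx k))‖)
        atTop (𝓝 ‖(fg : X → E) xstar - (b : X → E) xstar‖) :=
      (((hfgc.tendsto xstar).comp hxe).sub ((hbc.tendsto xstar).comp hxe)).norm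
    rw [hfgb, sub_self, norm_zero] at l3
    have hge : (1:ℝ)/2 ≤ 0 := by
      refine ge_of_tendsto l3 (Eventually.of_forall (fun k => ?_))
      rw [heven k]
      exact (hxw (idx k)).le
    linarith
  obtain ⟨n₀, hn₀⟩ := main
  have hgap : ∀ θ : ↥(CbSet Y F), (∀ y, ‖(θ : Y → F) y‖ ≤ K) →
      (∀ y, y ∉ ball (p n₀) (s n₀) → (θ : Y → F) y = 0) →
      ∀ x, (fE : X → E) x ≠ (Teq.symm θ : X → E) x := by
    intro θ hcapθ hsuppθ x heq
    have hbnd := hn₀ θ hcapθ hsuppθ x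
    rw [← heq] at hbnd
    have : (fE : X → E) x - (b : X → E) x = e := by
      show ((b : X → E) x + e) - (b : X → E) x = e
      exact add_sub_cancel_left _ _
    rw [this, he1] at hbnd
    linarith
  have hbound : ∀ y, ‖cutoff (p n₀) (s n₀) y • (γ : Y → F) y‖ ≤ K := by
    intro y
    rw [norm_smul, Real.norm_eq_abs, abs_of_nonneg (cutoff_nonneg _ _ _)]
    calc cutoff (p n₀) (s n₀) y * ‖(γ : Y → F) y‖
        ≤ 1 * ‖(γ : Y → F) y‖ :=
          mul_le_mul_of_nonneg_right (cutoff_le_one _ _ _) (norm_nonneg _)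
      _ = ‖(γ : Y → F) y‖ := one_mul _
      _ ≤ K := hK y
  let θstar : ↥(CbSet Y F) := ⟨fun y => cutoff (p n₀) (s n₀) y • (γ : Y → F) y,
    (cutoff_continuous _ _).smul γ.2.1, by
      rw [isBounded_iff_forall_norm_le]
      exact ⟨K, by rintro x ⟨y, rfl⟩; exact hbound y⟩⟩
  have hθcap : ∀ y, ‖(θstar : Y → F) y‖ ≤ K := hbound
  have hθsupp : ∀ y, y ∉ ball (p n₀) (s n₀) → (θstar : Y → F) y = 0 := by
    intro y hy
    show cutoff (p n₀) (s n₀) y • (γ : Y → F) y = 0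
    rw [cutoff_eq_zero (hspos n₀) hy, zero_smul]
  obtain ⟨wF, hwF⟩ := exists_ne (0 : F)
  let g' : ↥(CbSet Y F) := ⟨fun y => (θstar : Y → F) y + cutoff (p n₀) (s n₀/2) y • wF,
    θstar.2.1.add ((cutoff_continuous _ _).smul continuous_const), by
      rw [isBounded_iff_forall_norm_le]
      refine ⟨K + ‖wF‖, ?_⟩
      rintro x ⟨y, rfl⟩
      refine (norm_add_le _ _).trans (add_le_add (hθcap y) ?_)
      rw [norm_smul, Real.norm_eq_abs, abs_of_nonneg (cutoff_nonneg _ _ _)]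
      calc cutoff (p n₀) (s n₀/2) y * ‖wF‖ ≤ 1 * ‖wF‖ :=
            mul_le_mul_of_nonneg_right (cutoff_le_one _ _ _) (norm_nonneg _)
        _ = ‖wF‖ := one_mul _⟩
  have hsepY : ∀ y, (γ : Y → F) y = (θstar : Y → F) y ∨
      (g' : Y → F) y = (θstar : Y → F) y := by
    intro y
    by_cases hy : dist y (p n₀) < s n₀ / 2
    · left
      show (γ : Y → F) y = cutoff (p n₀) (s n₀) y • (γ : Y → F) y
      rw [cutoff_eq_one (hspos n₀) hy, one_smul]
    · right
      show (θstar : Y → F) y + cutoff (p n₀) (s n₀/2) y • wF = (θstar : Y → F) y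
      rw [cutoff_eq_zero (by have := hspos n₀; linarith : (0:ℝ) < s n₀/2)
        (fun hmem => hy (mem_ball.mp hmem)), zero_smul, add_zero]
  have htr : ∀ x, (fE : X → E) x = (Teq.symm θstar : X → E) x ∨
      (Teq.symm g' : X → E) x = (Teq.symm θstar : X → E) x := by
    refine (sep_iff T hT fE (Teq.symm g') (Teq.symm θstar)).mpr ?_
    have e1 : T fE = γ := rfl
    have e2 : T (Teq.symm g') = g' := Teq.apply_symm_apply _
    have e3 : T (Teq.symm θstar) = θstar := Teq.apply_symm_apply _
    rw [e1, e2, e3]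
    exact hsepY
  have hall : ∀ x, (Teq.symm g' : X → E) x = (Teq.symm θstar : X → E) x := by
    intro x
    rcases htr x with h | h
    · exact absurd h (hgap θstar hθcap hθsupp x)
    · exact h
  have hsg : Teq.symm g' = Teq.symm θstar := Subtype.ext (funext hall)
  have hgt : g' = θstar := Teq.symm.injective hsg
  have hval := congrArg (fun (h : ↥(CbSet Y F)) => (h : Y → F) (p n₀)) hgt
  have hcut1 : cutoff (p n₀) (s n₀ / 2) (p n₀) = 1 := by
    apply cutoff_eq_one (by have := hspos n₀; linarith : (0:ℝ) < s n₀ / 2)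
    rw [dist_self]
    have := hspos n₀
    linarith
  simp only [g'] at hval
  rw [hcut1, one_smul] at hval
  exact hwF (by
    have h0 : (θstar : Y → F) (p n₀) + wF = (θstar : Y → F) (p n₀) + 0 := by
      rw [add_zero]; exact hval
    exact add_left_cancel h0)

end Yhalf


/-- If there is a biseparating map `T : C(X,E) → C_*(Y,F)`, then `X` and `Y` are compact. -/
theorem stmt9 {X Y E F : Type*} [MetricSpace X] [MetricSpace Y]
    [NormedAddCommGroup E] [NormedSpace ℝ E] [Nontrivial E]
    [NormedAddCommGroup F] [NormedSpace ℝ F] [Nontrivial F]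
    (T : Cset X E → CbSet Y F) (hT : Biseparating T) :
    CompactSpace X ∧ CompactSpace Y := by
  have hX := compactX T hT
  exact ⟨hX, compactY T hT hX⟩

end Stmt9
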